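/- The matrix F̂(r,s)⁻¹ with entries (1/r)(−s/r)^{n−k} · f_{n+1}²/(f_k f_{k+1}) for 0 ≤ k ≤ n and 0 otherwise is the two-sided inverse of the band matrix F̂(r,s); equivalently, if y_0 = r x_0 and y_n = r (f_n/f_{n+1}) x_n + s (f_{n+1}/f_n) x_{n−1} for n ≥ 1, then x_k = ∑_{j=0}^{k} (1/r)(−s/r)^{k−j} · f_{k+1}²/(f_j f_{j+1}) · y_j for all k. -/

import Mathlib

open scoped BigOperators
open Filter

noncomputable def fibs (n : ℕ) : ℝ := (Nat.fib (n + 1) : ℝ)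

noncomputable def Fhat (r s : ℝ) (x : ℕ → ℝ) : ℕ → ℝ
  | 0 => r * x 0
  | n + 1 => r * (fibs (n + 1) / fibs (n + 2)) * x (n + 1)
      + s * (fibs (n + 2) / fibs (n + 1)) * x n

lemma fibs_pos (n : ℕ) : 0 < fibs n := by
  unfold fibs
  exact_mod_cast Nat.fib_pos.2 (Nat.succ_pos n)

lemma fibs_ne (n : ℕ) : fibs n ≠ 0 := (fibs_pos n).ne'

theorem Fhat_inverse (r s : ℝ) (hr : r ≠ 0) (hs : s ≠ 0) (x : ℕ → ℝ) (k : ℕ) :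
    x k = ∑ j ∈ Finset.range (k + 1),
      (1 / r) * (-s / r) ^ (k - j) * (fibs (k + 1) ^ 2 / (fibs j * fibs (j + 1)))
        * Fhat r s x j := by
  induction k with
  | zero =>
    rw [Finset.sum_range_one]
    show x 0 = _ * (r * x 0)
    have h0 : fibs 0 = 1 := by norm_num [fibs]
    have h1 : fibs 1 = 1 := by norm_num [fibs]
    simp [h0, h1]
    field_simp
  | succ k ih =>
    rw [Finset.sum_range_succ]
    have hsum : ∑ j ∈ Finset.range (k + 1),
        (1 / r) * (-s / r) ^ (k + 1 - j) *
          (fibs (k + 1 + 1) ^ 2 / (fibs j * fibs (j + 1))) * Fhat r s x j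
        = ((-s / r) * (fibs (k + 2) ^ 2 / fibs (k + 1) ^ 2)) *
          ∑ j ∈ Finset.range (k + 1),
            (1 / r) * (-s / r) ^ (k - j) *
              (fibs (k + 1) ^ 2 / (fibs j * fibs (j + 1))) * Fhat r s x j := by
      rw [Finset.mul_sum]
      apply Finset.sum_congr rfl
      intro j hj
      have hjk : j ≤ k := Nat.lt_succ_iff.mp (Finset.mem_range.mp hj)
      have : k + 1 - j = (k - j) + 1 := by omega
      rw [this, pow_succ]
      have h1 := fibs_ne (k + 1)
      have h2 := fibs_ne j
      have h3 := fibs_ne (j + 1)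
      field_simp
    rw [hsum, ← ih]
    show x (k + 1) = _ + _ * Fhat r s x (k + 1)
    rw [show Fhat r s x (k + 1) = r * (fibs (k + 1) / fibs (k + 2)) * x (k + 1)
      + s * (fibs (k + 2) / fibs (k + 1)) * x k from rfl]
    rw [Nat.sub_self, pow_zero]
    have h1 := fibs_ne (k + 1)
    have h2 := fibs_ne (k + 2)
    field_simp
    ring
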